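/- arXiv:1907.02301 — 2 statements merged into one kernel-verified Lean document; each statement's English description precedes it below -/
import Mathlib

section
/- Let L be a category with coequalizers of kernel pairs and with cokernel pairs, and let J : D ↪ L be the inclusion of a full weakly reflective subcategory such that for every object X of L a weak reflection X → S into D can be chosen to be a regular monomorphism. Then D is codense in L: the functor L^op → [D, Set] sending X to Hom_L(X, J−) is fully faithful. -/
open CategoryTheory CategoryTheory.Limits Opposite

universe w v u

namespace Paper

variable {C : Type u} [Category.{v} C]

/-- An object is finitely presentable if its covariant hom-functor preserves
small filtered colimits. -/
def FinPres (A : C) : Prop :=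
  ∀ (J : Type v) (_ : SmallCategory J), IsFiltered J →
    PreservesColimitsOfShape J (coyoneda.obj (op A))

/-- `f` is a regular epimorphism (a coequalizer of some pair). -/
def IsRegEpi {X Y : C} (f : X ⟶ Y) : Prop := Nonempty (RegularEpi f)

/-- `P` is regular projective: `Hom(P,-)` sends regular epimorphisms to surjections. -/
def RegProjective (P : C) : Prop :=
  ∀ ⦃X Y : C⦄ (f : X ⟶ Y), IsRegEpi f → Function.Surjective (fun g : P ⟶ X => g ≫ f)

/-- A regular category: finite limits, coequalizers of kernel pairs, and regular
epimorphisms stable under pullback. -/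
structure IsRegularCategory (C : Type u) [Category.{v} C] : Prop where
  hasFiniteLimits : HasFiniteLimits C
  hasCoequalizersOfKernelPairs :
    ∀ {X Y R : C} (f : X ⟶ Y) (p q : R ⟶ X), IsKernelPair f p q → HasCoequalizer p q
  regEpiPullbackStable :
    ∀ {P X Y Z : C} (fst : P ⟶ X) (snd : P ⟶ Y) (f : X ⟶ Z) (g : Y ⟶ Z),
      IsPullback fst snd f g → IsRegEpi f → IsRegEpi snd

/-- `(p, q)` is an internal equivalence relation on `X` (via generalized elements). -/
structure IsEquivalenceRelationPair {R X : C} (p q : R ⟶ X) : Prop where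
  jointly_mono : ∀ {Z : C} (a b : Z ⟶ R), a ≫ p = b ≫ p → a ≫ q = b ≫ q → a = b
  refl : ∀ {Z : C} (x : Z ⟶ X), ∃ r : Z ⟶ R, r ≫ p = x ∧ r ≫ q = x
  symm : ∀ {Z : C} (r : Z ⟶ R), ∃ s : Z ⟶ R, s ≫ p = r ≫ q ∧ s ≫ q = r ≫ p
  trans : ∀ {Z : C} (r s : Z ⟶ R), r ≫ q = s ≫ p →
    ∃ t : Z ⟶ R, t ≫ p = r ≫ p ∧ t ≫ q = s ≫ q

/-- An exact category: regular and every equivalence relation is effective. -/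
structure IsExactCategory (C : Type u) [Category.{v} C] extends IsRegularCategory C : Prop where
  effectiveEquivalenceRelations :
    ∀ {R X : C} (p q : R ⟶ X), IsEquivalenceRelationPair p q →
      ∃ (Y : C) (f : X ⟶ Y), IsKernelPair f p q

/-- Locally finitely presentable category. -/
structure IsLFP (C : Type u) [Category.{v} C] : Prop where
  hasColimits : HasColimitsOfSize.{v, v} C
  exists_generator : ∃ (ι : Type v) (G : ι → C),
    ObjectProperty.IsDetecting (fun X => X ∈ Set.range G) ∧ ∀ i, FinPres (G i)

/-- A finitary quasivariety: cocomplete with a small strong generator of finitely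
presentable regular projective objects. -/
structure IsFinitaryQuasivariety (C : Type u) [Category.{v} C] : Prop where
  hasColimits : HasColimitsOfSize.{v, v} C
  exists_generator : ∃ (ι : Type v) (G : ι → C),
    ObjectProperty.IsDetecting (fun X => X ∈ Set.range G) ∧ ∀ i, FinPres (G i) ∧ RegProjective (G i)

/-- The injectivity class determined by a family of morphisms. -/
def Inj {L : Type u} [Category.{v} L] {ι : Type w} (A B : ι → L) (h : ∀ i, A i ⟶ B i) :
    Set L :=
  {X | ∀ (i : ι) (g : A i ⟶ X), ∃ g' : B i ⟶ X, h i ≫ g' = g}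

/-- `p : X ⟶ S` is a weak reflection of `X` into `D`. -/
def WeakReflection {L : Type u} [Category.{v} L] (D : Set L) {X S : L} (p : X ⟶ S) : Prop :=
  S ∈ D ∧ ∀ T ∈ D, ∀ g : X ⟶ T, ∃ k : S ⟶ T, p ≫ k = g


/-- The functor `Lᵒᵖ ⥤ [D, Set]` sending `X` to `Hom_L(X, J-)`, where
`J : D ↪ L` is the inclusion of the full subcategory on `D`. -/
def codensityComparison (L : Type u) [Category.{v} L] (D : Set L) :
    Lᵒᵖ ⥤ (ObjectProperty.FullSubcategory (fun X => X ∈ D) ⥤ Type v) :=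
  coyoneda ⋙
    (Functor.whiskeringLeft (ObjectProperty.FullSubcategory (fun X => X ∈ D)) L (Type v)).obj
      (ObjectProperty.ι (fun X => X ∈ D))

/-- If `L` has coequalizers of kernel pairs and cokernel pairs, and
`D` is a full weakly reflective subcategory whose weak reflections can be chosen
to be regular monomorphisms, then `D` is codense in `L`: the canonical functor
`Lᵒᵖ ⥤ [D, Set]`, `X ↦ Hom_L(X, J-)`, is fully faithful. -/
theorem statement1 (L : Type u) [Category.{v} L]
    (hcoeq : ∀ {X Y R : L} (f : X ⟶ Y) (p q : R ⟶ X), IsKernelPair f p q → HasCoequalizer p q)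
    (hcokernel : ∀ {X Y : L} (f : X ⟶ Y), HasPushout f f)
    (D : Set L)
    (hwr : ∀ X : L, ∃ (S : L) (p : X ⟶ S),
      WeakReflection D p ∧ Nonempty (RegularMono p)) :
    (codensityComparison L D).Full ∧ (codensityComparison L D).Faithful := by
  have key : ∀ (Xop Yop : Lᵒᵖ)
      (α : (codensityComparison L D).obj Xop ⟶ (codensityComparison L D).obj Yop),
      ∃ f : Yop.unop ⟶ Xop.unop, ∀ (T : ObjectProperty.FullSubcategory (fun X => X ∈ D))
        (g : Xop.unop ⟶ T.obj), α.app T g = f ≫ g := by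
    intro Xop Yop α
    obtain ⟨S, p, ⟨hS, hp⟩, ⟨rm⟩⟩ := hwr Xop.unop
    obtain ⟨Z', r, ⟨hZ', _⟩, ⟨rr⟩⟩ := hwr rm.Z
    haveI : RegularMono r := rr
    haveI : Mono r := rr.mono
    set a : Yop.unop ⟶ S := α.app ⟨S, hS⟩ p with ha
    have nat : ∀ (T T' : ObjectProperty.FullSubcategory (fun X => X ∈ D)) (h : T.obj ⟶ T'.obj)
        (g : Xop.unop ⟶ T.obj), α.app T' (g ≫ h) = α.app T g ≫ h := by
      intro T T' h g
      have := NatTrans.naturality_apply α (ObjectProperty.homMk h) g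
      exact this
    have hw : a ≫ rm.left = a ≫ rm.right := by
      have h1 := nat ⟨S, hS⟩ ⟨Z', hZ'⟩ (rm.left ≫ r) p
      have h2 := nat ⟨S, hS⟩ ⟨Z', hZ'⟩ (rm.right ≫ r) p
      have hpw : p ≫ rm.left ≫ r = p ≫ rm.right ≫ r := by
        rw [← Category.assoc, ← Category.assoc, rm.w]
      rw [hpw] at h1
      have : a ≫ rm.left ≫ r = a ≫ rm.right ≫ r := by rw [← h1, ← h2]
      rw [← Category.assoc, ← Category.assoc] at this
      exact (cancel_mono r).mp this
    obtain ⟨f, hf⟩ := Fork.IsLimit.lift' rm.isLimit a hw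
    refine ⟨f, ?_⟩
    intro T g
    obtain ⟨k, hk⟩ := hp T.obj T.property g
    have := nat ⟨S, hS⟩ T k p
    rw [hk] at this
    rw [this, ← ha, ← hf]
    simp [← hk]
    rfl
  constructor
  · constructor
    intro Xop Yop α
    obtain ⟨f, hf⟩ := key Xop Yop α
    refine ⟨f.op, ?_⟩
    ext T g
    exact (hf T g).symm
  · constructor
    intro Xop Yop f g h
    obtain ⟨S, p, ⟨hS, hp⟩, ⟨rm⟩⟩ := hwr Xop.unop
    haveI : RegularMono p := rm
    haveI : Mono p := rm.mono
    have := congrFun (congrArg (fun β => β.app ⟨S, hS⟩)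
      (h : (codensityComparison L D).map f = (codensityComparison L D).map g)) p
    have h2 : f.unop ≫ p = g.unop ≫ p := this
    exact Quiver.Hom.unop_inj ((cancel_mono p).mp h2)

end Paper
end

section
/- Let L be a locally finitely presentable category and J : D ↪ L the inclusion of a finite injectivity class D = M-inj. Let F : D → Set be a functor preserving small products and filtered colimits, and suppose that for every L' ∈ D and every element x ∈ F(L') there exist a finitely presentable object A of L and a natural transformation η : Hom_L(A, J−) → F such that x lies in the image of η_{L'}. Then there exist a finitely presentable object B of L and a pointwise surjective natural transformation Hom_L(B, J−) → F. -/
open CategoryTheory CategoryTheory.Limits Opposite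

universe w v u

namespace Paper

variable {C : Type u} [Category.{v} C]

section Dev

variable {L : Type u} [Category.{v} L]

lemma FinPres.factor {A : L} (hA : FinPres A) {J : Type v} [SmallCategory J]
    (hJ : IsFiltered J) (Fd : J ⥤ L) {t : Cocone Fd} (ht : IsColimit t) (u : A ⟶ t.pt) :
    ∃ (j : J) (g : A ⟶ Fd.obj j), g ≫ t.ι.app j = u := by
  haveI : PreservesColimitsOfShape J (coyoneda.obj (op A)) := hA J _ hJ
  have h2 := isColimitOfPreserves (coyoneda.obj (op A)) ht
  obtain ⟨j, y, hy⟩ := Types.jointly_surjective _ h2 u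
  exact ⟨j, y, hy⟩

lemma FinPres.merge {A : L} (hA : FinPres A) {J : Type v} [SmallCategory J]
    (hJ : IsFiltered J) (Fd : J ⥤ L) {t : Cocone Fd} (ht : IsColimit t) {j j' : J}
    (g : A ⟶ Fd.obj j) (g' : A ⟶ Fd.obj j')
    (h : g ≫ t.ι.app j = g' ≫ t.ι.app j') :
    ∃ (k : J) (f : j ⟶ k) (f' : j' ⟶ k), g ≫ Fd.map f = g' ≫ Fd.map f' := by
  haveI : PreservesColimitsOfShape J (coyoneda.obj (op A)) := hA J _ hJ
  haveI : IsFiltered J := hJ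
  have h2 := isColimitOfPreserves (coyoneda.obj (op A)) ht
  exact (Types.FilteredColimit.isColimit_eq_iff
    (Fd ⋙ coyoneda.obj (op A)) h2 (xi := g) (xj := g')).mp h

lemma finPres_of (A : L)
    (H : ∀ (J : Type v) (_ : SmallCategory J), IsFiltered J →
      ∀ (Fd : J ⥤ L) (t : Cocone Fd), IsColimit t →
      (∀ u : A ⟶ t.pt, ∃ (j : J) (g : A ⟶ Fd.obj j), g ≫ t.ι.app j = u) ∧
      (∀ (j j' : J) (g : A ⟶ Fd.obj j) (g' : A ⟶ Fd.obj j'),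
        g ≫ t.ι.app j = g' ≫ t.ι.app j' →
        ∃ (k : J) (f : j ⟶ k) (f' : j' ⟶ k), g ≫ Fd.map f = g' ≫ Fd.map f')) :
    FinPres A := by
  intro J inst hJ
  haveI : IsFiltered J := hJ
  constructor
  intro K
  constructor
  intro t ht
  obtain ⟨h1, h2⟩ := H J inst hJ K t ht
  refine ⟨Types.FilteredColimit.isColimitOf _ _ ?_ ?_⟩
  · intro u
    obtain ⟨j, g, hg⟩ := h1 u
    exact ⟨j, g, hg.symm⟩
  · intro i j xi xj hx
    exact h2 i j xi xj hx

lemma finPres_initial {A : L} (hA : IsInitial A) : FinPres A := by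
  refine finPres_of A ?_
  intro J inst hJ Fd t ht
  haveI : IsFiltered J := hJ
  constructor
  · intro u
    obtain ⟨j⟩ := IsFiltered.nonempty (C := J)
    exact ⟨j, hA.to _, hA.hom_ext _ _⟩
  · intro j j' g g' _
    obtain ⟨k, f, f', -⟩ := IsFilteredOrEmpty.cocone_objs j j'
    exact ⟨k, f, f', hA.hom_ext _ _⟩

lemma finPres_coprod {c₁ c₂ P : L} (h₁ : FinPres c₁) (h₂ : FinPres c₂)
    (i₁ : c₁ ⟶ P) (i₂ : c₂ ⟶ P) (hP : IsColimit (BinaryCofan.mk i₁ i₂)) :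
    FinPres P := by
  have hext : ∀ {X : L} (u v : P ⟶ X), i₁ ≫ u = i₁ ≫ v → i₂ ≫ u = i₂ ≫ v → u = v := by
    intro X u v e₁ e₂
    refine hP.hom_ext ?_
    rintro ⟨⟨⟩⟩ <;> assumption
  refine finPres_of P ?_
  intro J inst hJ Fd t ht
  haveI : IsFiltered J := hJ
  constructor
  · intro u
    obtain ⟨j₁, g₁, hg₁⟩ := h₁.factor hJ Fd ht (i₁ ≫ u)
    obtain ⟨j₂, g₂, hg₂⟩ := h₂.factor hJ Fd ht (i₂ ≫ u)
    obtain ⟨k, f₁, f₂, -⟩ := IsFilteredOrEmpty.cocone_objs j₁ j₂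
    refine ⟨k, hP.desc (BinaryCofan.mk (g₁ ≫ Fd.map f₁) (g₂ ≫ Fd.map f₂)), hext _ _ ?_ ?_⟩
    · have := hP.fac (BinaryCofan.mk (g₁ ≫ Fd.map f₁) (g₂ ≫ Fd.map f₂)) ⟨WalkingPair.left⟩
      dsimp at this
      erw [← Category.assoc, this, Category.assoc, t.w f₁, hg₁]
    · have := hP.fac (BinaryCofan.mk (g₁ ≫ Fd.map f₁) (g₂ ≫ Fd.map f₂)) ⟨WalkingPair.right⟩
      dsimp at this
      erw [← Category.assoc, this, Category.assoc, t.w f₂, hg₂]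
  · intro j j' xi xj hx
    obtain ⟨k₁, f₁, f₁', e₁⟩ := h₁.merge hJ Fd ht (i₁ ≫ xi) (i₁ ≫ xj)
      (by rw [Category.assoc, Category.assoc, hx])
    obtain ⟨k₂, f₂, f₂', e₂⟩ := h₂.merge hJ Fd ht (i₂ ≫ xi) (i₂ ≫ xj)
      (by rw [Category.assoc, Category.assoc, hx])
    let k₀ := IsFiltered.max k₁ k₂
    let u₁ : k₁ ⟶ k₀ := IsFiltered.leftToMax _ _
    let u₂ : k₂ ⟶ k₀ := IsFiltered.rightToMax _ _
    let α : j ⟶ k₀ := f₁ ≫ u₁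
    let β : j ⟶ k₀ := f₂ ≫ u₂
    let q : k₀ ⟶ IsFiltered.coeq α β := IsFiltered.coeqHom α β
    have hq : α ≫ q = β ≫ q := IsFiltered.coeq_condition α β
    let α' : j' ⟶ IsFiltered.coeq α β := f₁' ≫ u₁ ≫ q
    let β' : j' ⟶ IsFiltered.coeq α β := f₂' ≫ u₂ ≫ q
    let r := IsFiltered.coeqHom α' β'
    have hr : α' ≫ r = β' ≫ r := IsFiltered.coeq_condition α' β'
    have E1 := reassoc_of% e₁
    have E2 := reassoc_of% e₂
    refine ⟨_, α ≫ q ≫ r, α' ≫ r, hext _ _ ?_ ?_⟩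
    · rw [show α ≫ q ≫ r = f₁ ≫ (u₁ ≫ q ≫ r) by simp [α],
          show α' ≫ r = f₁' ≫ (u₁ ≫ q ≫ r) by simp [α']]
      simp only [Functor.map_comp, Category.assoc]
      rw [E1]
    · have hles : α ≫ q ≫ r = f₂ ≫ (u₂ ≫ q ≫ r) := by
        rw [← Category.assoc, hq]; simp [β]
      have hres : α' ≫ r = f₂' ≫ (u₂ ≫ q ≫ r) := by
        rw [hr]; simp [β']
      rw [hles, hres]
      simp only [Functor.map_comp, Category.assoc]
      rw [E2]

lemma finPres_coeq {c₁ c₂ Q : L} (h₁ : FinPres c₁) (h₂ : FinPres c₂)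
    (f g : c₁ ⟶ c₂) (π : c₂ ⟶ Q) (hw : f ≫ π = g ≫ π)
    (hdesc : ∀ {X : L} (u : c₂ ⟶ X), f ≫ u = g ≫ u → ∃ d : Q ⟶ X, π ≫ d = u)
    (hepi : ∀ {X : L} (u v : Q ⟶ X), π ≫ u = π ≫ v → u = v) : FinPres Q := by
  refine finPres_of Q ?_
  intro J inst hJ Fd t ht
  haveI : IsFiltered J := hJ
  constructor
  · intro u
    obtain ⟨j, v, hv⟩ := h₂.factor hJ Fd ht (π ≫ u)
    have : (f ≫ v) ≫ t.ι.app j = (g ≫ v) ≫ t.ι.app j := by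
      rw [Category.assoc, hv, ← Category.assoc, hw, Category.assoc, ← hv, ← Category.assoc]
    obtain ⟨k, m, m', hm⟩ := h₁.merge hJ Fd ht (f ≫ v) (g ≫ v) this
    let n := IsFiltered.coeqHom m m'
    have hn : m ≫ n = m' ≫ n := IsFiltered.coeq_condition m m'
    have key : f ≫ (v ≫ Fd.map (m ≫ n)) = g ≫ (v ≫ Fd.map (m ≫ n)) := by
      have Em := reassoc_of% hm
      simp only [Functor.map_comp]
      rw [Em]
      simp only [← Functor.map_comp, hn]
    obtain ⟨d, hd⟩ := hdesc (v ≫ Fd.map (m ≫ n)) key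
    refine ⟨_, d, hepi _ _ ?_⟩
    rw [← Category.assoc, hd, Category.assoc, t.w (m ≫ n), hv]
  · intro j j' xi xj hx
    obtain ⟨k, m, m', hm⟩ := h₂.merge hJ Fd ht (π ≫ xi) (π ≫ xj)
      (by rw [Category.assoc, Category.assoc, hx])
    refine ⟨k, m, m', hepi _ _ ?_⟩
    rw [← Category.assoc, ← Category.assoc]
    exact hm

end Dev

noncomputable section Codes

variable {L : Type u} [Category.{v} L] [HasColimits L] {ιG : Type v} (Gv : ιG → L)

def famStep (P : Σ α : Type v, α → L) : Σ α : Type v, α → L :=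
  ⟨P.1 ⊕ ((P.1 × P.1) ⊕ (Σ p : P.1 × P.1, (P.2 p.1 ⟶ P.2 p.2) × (P.2 p.1 ⟶ P.2 p.2))),
   fun x => match x with
   | .inl a => P.2 a
   | .inr (.inl q) => P.2 q.1 ⨿ P.2 q.2
   | .inr (.inr q) => coequalizer q.2.1 q.2.2⟩

def fam : ℕ → Σ α : Type v, α → L
  | 0 => ⟨ιG ⊕ PUnit.{v+1}, fun x => match x with | .inl i => Gv i | .inr _ => ⊥_ L⟩
  | n+1 => famStep (fam n)

abbrev Codes : Type v := Σ n : ℕ, (fam Gv n).1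

def WC : Codes Gv → L := fun k => (fam Gv k.1).2 k.2

def liftTo {m : ℕ} (a : (fam Gv m).1) : ∀ k : ℕ, (fam Gv (m + k)).1
  | 0 => a
  | k+1 => Sum.inl (liftTo a k)

lemma fam_liftTo {m : ℕ} (a : (fam Gv m).1) :
    ∀ k, (fam Gv (m+k)).2 (liftTo Gv a k) = (fam Gv m).2 a
  | 0 => rfl
  | k+1 => fam_liftTo a k

def castCode {p q : ℕ} (e : p = q) (x : (fam Gv p).1) : (fam Gv q).1 :=
  cast (congrArg (fun m => (fam (L := L) Gv m).1) e) x

lemma fam_castCode {p q : ℕ} (e : p = q) (x : (fam Gv p).1) :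
    (fam Gv q).2 (castCode Gv e x) = (fam Gv p).2 x := by subst e; rfl

def toLvl (k : Codes Gv) {n : ℕ} (h : k.1 ≤ n) : (fam Gv n).1 :=
  castCode Gv (Nat.add_sub_cancel' h) (liftTo Gv k.2 (n - k.1))

lemma fam_toLvl (k : Codes Gv) {n : ℕ} (h : k.1 ≤ n) :
    (fam Gv n).2 (toLvl Gv k h) = WC Gv k := by
  rw [toLvl, fam_castCode, fam_liftTo]; rfl

def kgen (i : ιG) : Codes Gv := ⟨0, Sum.inl i⟩

lemma WC_kgen (i : ιG) : WC Gv (kgen Gv i) = Gv i := rfl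

def kbot : Codes Gv := ⟨0, Sum.inr PUnit.unit⟩

def kbotTo (X : L) : WC Gv (kbot Gv) ⟶ X := (initial.to X : ⊥_ L ⟶ X)

section Ops

variable (k₁ k₂ : Codes Gv)

def ksum : Codes Gv :=
  ⟨max k₁.1 k₂.1 + 1, Sum.inr (Sum.inl
    (toLvl Gv k₁ (le_max_left k₁.1 k₂.1), toLvl Gv k₂ (le_max_right k₁.1 k₂.1)))⟩

def ksumIn₁ : WC Gv k₁ ⟶ WC Gv (ksum Gv k₁ k₂) :=
  eqToHom (fam_toLvl Gv k₁ (le_max_left k₁.1 k₂.1)).symm ≫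
    (coprod.inl :
      _ ⟶ (fam Gv (max k₁.1 k₂.1)).2 (toLvl Gv k₁ (le_max_left k₁.1 k₂.1)) ⨿
        (fam Gv (max k₁.1 k₂.1)).2 (toLvl Gv k₂ (le_max_right k₁.1 k₂.1)))

def ksumIn₂ : WC Gv k₂ ⟶ WC Gv (ksum Gv k₁ k₂) :=
  eqToHom (fam_toLvl Gv k₂ (le_max_right k₁.1 k₂.1)).symm ≫
    (coprod.inr :
      _ ⟶ (fam Gv (max k₁.1 k₂.1)).2 (toLvl Gv k₁ (le_max_left k₁.1 k₂.1)) ⨿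
        (fam Gv (max k₁.1 k₂.1)).2 (toLvl Gv k₂ (le_max_right k₁.1 k₂.1)))

variable {k₁ k₂}

def ksumDesc {X : L} (f : WC Gv k₁ ⟶ X) (g : WC Gv k₂ ⟶ X) :
    WC Gv (ksum Gv k₁ k₂) ⟶ X :=
  coprod.desc (eqToHom (fam_toLvl Gv k₁ (le_max_left k₁.1 k₂.1)) ≫ f)
    (eqToHom (fam_toLvl Gv k₂ (le_max_right k₁.1 k₂.1)) ≫ g)

@[simp] lemma ksumIn₁_desc {X : L} (f : WC Gv k₁ ⟶ X) (g : WC Gv k₂ ⟶ X) :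
    ksumIn₁ Gv k₁ k₂ ≫ ksumDesc Gv f g = f := by
  unfold ksumIn₁ ksumDesc
  erw [Category.assoc, coprod.inl_desc]
  simp

@[simp] lemma ksumIn₂_desc {X : L} (f : WC Gv k₁ ⟶ X) (g : WC Gv k₂ ⟶ X) :
    ksumIn₂ Gv k₁ k₂ ≫ ksumDesc Gv f g = g := by
  unfold ksumIn₂ ksumDesc
  erw [Category.assoc, coprod.inr_desc]
  simp

lemma ksum_hom_ext {X : L} {u v : WC Gv (ksum Gv k₁ k₂) ⟶ X}
    (h1 : ksumIn₁ Gv k₁ k₂ ≫ u = ksumIn₁ Gv k₁ k₂ ≫ v)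
    (h2 : ksumIn₂ Gv k₁ k₂ ≫ u = ksumIn₂ Gv k₁ k₂ ≫ v) : u = v := by
  unfold ksumIn₁ at h1
  unfold ksumIn₂ at h2
  erw [Category.assoc, Category.assoc] at h1 h2
  exact coprod.hom_ext ((cancel_epi (eqToHom _)).mp h1) ((cancel_epi (eqToHom _)).mp h2)

variable (k₁ k₂)

def lvf (f : WC Gv k₁ ⟶ WC Gv k₂) :
    (fam Gv (max k₁.1 k₂.1)).2 (toLvl Gv k₁ (le_max_left k₁.1 k₂.1)) ⟶
      (fam Gv (max k₁.1 k₂.1)).2 (toLvl Gv k₂ (le_max_right k₁.1 k₂.1)) :=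
  eqToHom (fam_toLvl Gv k₁ (le_max_left k₁.1 k₂.1)) ≫ f ≫
    eqToHom (fam_toLvl Gv k₂ (le_max_right k₁.1 k₂.1)).symm

variable (f g : WC Gv k₁ ⟶ WC Gv k₂)

def kcoeq : Codes Gv :=
  ⟨max k₁.1 k₂.1 + 1, Sum.inr (Sum.inr
    ⟨(toLvl Gv k₁ (le_max_left k₁.1 k₂.1), toLvl Gv k₂ (le_max_right k₁.1 k₂.1)),
     lvf Gv k₁ k₂ f, lvf Gv k₁ k₂ g⟩)⟩

def kcoeqPi : WC Gv k₂ ⟶ WC Gv (kcoeq Gv k₁ k₂ f g) :=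
  eqToHom (fam_toLvl Gv k₂ (le_max_right k₁.1 k₂.1)).symm ≫
    coequalizer.π (lvf Gv k₁ k₂ f) (lvf Gv k₁ k₂ g)

lemma kcoeq_cond : f ≫ kcoeqPi Gv k₁ k₂ f g = g ≫ kcoeqPi Gv k₁ k₂ f g := by
  have h := coequalizer.condition (lvf Gv k₁ k₂ f) (lvf Gv k₁ k₂ g)
  unfold lvf at h
  simp only [Category.assoc] at h
  unfold kcoeqPi
  exact (cancel_epi (eqToHom (fam_toLvl Gv k₁ (le_max_left k₁.1 k₂.1)))).mp h

variable {k₁ k₂ f g}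

def kcoeqDesc {X : L} (u : WC Gv k₂ ⟶ X) (w : f ≫ u = g ≫ u) :
    WC Gv (kcoeq Gv k₁ k₂ f g) ⟶ X :=
  coequalizer.desc (eqToHom (fam_toLvl Gv k₂ (le_max_right k₁.1 k₂.1)) ≫ u)
    (by unfold lvf
        simp only [Category.assoc, eqToHom_trans_assoc, eqToHom_refl, Category.id_comp]
        rw [w])

@[simp] lemma kcoeqPi_desc {X : L} (u : WC Gv k₂ ⟶ X) (w : f ≫ u = g ≫ u) :
    kcoeqPi Gv k₁ k₂ f g ≫ kcoeqDesc Gv u w = u := by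
  unfold kcoeqPi kcoeqDesc
  erw [Category.assoc, coequalizer.π_desc]
  simp

lemma kcoeq_hom_ext {X : L} {u v : WC Gv (kcoeq Gv k₁ k₂ f g) ⟶ X}
    (h : kcoeqPi Gv k₁ k₂ f g ≫ u = kcoeqPi Gv k₁ k₂ f g ≫ v) : u = v := by
  unfold kcoeqPi at h
  erw [Category.assoc, Category.assoc] at h
  exact coequalizer.hom_ext ((cancel_epi (eqToHom _)).mp h)

end Ops

lemma finPres_WC (hG : ∀ i, FinPres (Gv i)) : ∀ k : Codes Gv, FinPres (WC Gv k) := by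
  suffices H : ∀ n (a : (fam Gv n).1), FinPres ((fam (L := L) Gv n).2 a) from fun k => H k.1 k.2
  intro n
  induction n with
  | zero =>
    rintro (i | ⟨⟩)
    · exact hG i
    · exact finPres_initial initialIsInitial
  | succ n ih =>
    rintro (a | ⟨a, b⟩ | ⟨⟨a, b⟩, f', g'⟩)
    · exact ih a
    · exact finPres_coprod (ih a) (ih b) coprod.inl coprod.inr (coprodIsCoprod _ _)
    · exact finPres_coeq (ih a) (ih b) f' g' (coequalizer.π _ _) (coequalizer.condition _ _)
        (fun u w => ⟨coequalizer.desc u w, coequalizer.π_desc _ _⟩)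
        (fun u v h => coequalizer.hom_ext h)

end Codes

noncomputable section ConeCodes

variable {L : Type u} [Category.{v} L] [HasColimits L] {ιG : Type v} (Gv : ιG → L)
variable {K : Type v} (S : K → L)

structure ConeCode : Type v where
  k : Codes Gv
  c : ∀ j : K, WC Gv k ⟶ S j

instance : Category.{v} (ConeCode Gv S) where
  Hom a b := {m : WC Gv a.k ⟶ WC Gv b.k // ∀ j, m ≫ b.c j = a.c j}
  id a := ⟨𝟙 _, fun j => Category.id_comp _⟩
  comp u v := ⟨u.1 ≫ v.1, fun j => by rw [Category.assoc, v.2 j, u.2 j]⟩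

@[simp] lemma ConeCode.id_val (a : ConeCode Gv S) : (𝟙 a : a ⟶ a).1 = 𝟙 (WC Gv a.k) := rfl

@[simp] lemma ConeCode.comp_val {a b c : ConeCode Gv S} (u : a ⟶ b) (v : b ⟶ c) :
    (u ≫ v).1 = u.1 ≫ v.1 := rfl

instance : Nonempty (ConeCode Gv S) := ⟨⟨kbot Gv, fun j => kbotTo Gv (S j)⟩⟩

def ConeCode.sumObj (a b : ConeCode Gv S) : ConeCode Gv S :=
  ⟨ksum Gv a.k b.k, fun j => ksumDesc Gv (a.c j) (b.c j)⟩

def ConeCode.sumIn₁ (a b : ConeCode Gv S) : a ⟶ ConeCode.sumObj Gv S a b :=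
  ⟨ksumIn₁ Gv a.k b.k, fun j => ksumIn₁_desc Gv _ _⟩

def ConeCode.sumIn₂ (a b : ConeCode Gv S) : b ⟶ ConeCode.sumObj Gv S a b :=
  ⟨ksumIn₂ Gv a.k b.k, fun j => ksumIn₂_desc Gv _ _⟩

def ConeCode.coeqObj {a b : ConeCode Gv S} (u v : a ⟶ b) : ConeCode Gv S :=
  ⟨kcoeq Gv a.k b.k u.1 v.1, fun j =>
    kcoeqDesc (f := u.1) (g := v.1) Gv (b.c j) ((u.2 j).trans (v.2 j).symm)⟩

def ConeCode.coeqPi {a b : ConeCode Gv S} (u v : a ⟶ b) : b ⟶ ConeCode.coeqObj Gv S u v :=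
  ⟨kcoeqPi Gv a.k b.k u.1 v.1, fun j =>
    kcoeqPi_desc Gv (b.c j) ((u.2 j).trans (v.2 j).symm)⟩

instance : IsFilteredOrEmpty (ConeCode Gv S) where
  cocone_objs a b :=
    ⟨ConeCode.sumObj Gv S a b, ConeCode.sumIn₁ Gv S a b, ConeCode.sumIn₂ Gv S a b, trivial⟩
  cocone_maps a b u v :=
    ⟨ConeCode.coeqObj Gv S u v, ConeCode.coeqPi Gv S u v, by
      exact Subtype.ext (kcoeq_cond Gv a.k b.k u.1 v.1)⟩

instance : IsFiltered (ConeCode Gv S) := ⟨⟩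

def codeDiag : ConeCode Gv S ⥤ L where
  obj a := WC Gv a.k
  map u := u.1

def codeColim : L := colimit (codeDiag Gv S)

def codeCocone (j : K) : Cocone (codeDiag Gv S) where
  pt := S j
  ι :=
    { app := fun a => a.c j
      naturality := by
        intro a b u
        dsimp [codeDiag]
        rw [u.2 j, Category.comp_id] }

def codeProj (j : K) : codeColim Gv S ⟶ S j :=
  colimit.desc (codeDiag Gv S) (codeCocone Gv S j)

@[simp] lemma ι_codeProj (a : ConeCode Gv S) (j : K) :
    colimit.ι (codeDiag Gv S) a ≫ codeProj Gv S j = a.c j :=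
  colimit.ι_desc _ _

lemma code_merge (a : ConeCode Gv S) (k₀ : Codes Gv) (u v : WC Gv k₀ ⟶ WC Gv a.k)
    (h : ∀ j, u ≫ a.c j = v ≫ a.c j) :
    u ≫ colimit.ι (codeDiag Gv S) a = v ≫ colimit.ι (codeDiag Gv S) a := by
  let b : ConeCode Gv S := ⟨kcoeq Gv k₀ a.k u v, fun j =>
    kcoeqDesc (f := u) (g := v) Gv (a.c j) (h j)⟩
  let m : a ⟶ b := ⟨kcoeqPi Gv k₀ a.k u v, fun j => kcoeqPi_desc Gv (a.c j) (h j)⟩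
  have hw : colimit.ι (codeDiag Gv S) a =
      kcoeqPi Gv k₀ a.k u v ≫ colimit.ι (codeDiag Gv S) b := by
    rw [← colimit.w (codeDiag Gv S) m]; rfl
  rw [hw]; exact (reassoc_of% (kcoeq_cond Gv k₀ a.k u v)) _

lemma code_hom_ext (hG : ∀ i, FinPres (Gv i)) (k₀ : Codes Gv)
    (s s' : WC Gv k₀ ⟶ codeColim Gv S)
    (h : ∀ j, s ≫ codeProj Gv S j = s' ≫ codeProj Gv S j) : s = s' := by
  obtain ⟨a, x, hx0⟩ := (finPres_WC Gv hG k₀).factor inferInstance (codeDiag Gv S)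
    (colimit.isColimit _) s
  obtain ⟨b, y, hy0⟩ := (finPres_WC Gv hG k₀).factor inferInstance (codeDiag Gv S)
    (colimit.isColimit _) s'
  have hx : x ≫ colimit.ι (codeDiag Gv S) a = s := hx0
  have hy : y ≫ colimit.ι (codeDiag Gv S) b = s' := hy0
  have ha : s = (x ≫ ksumIn₁ Gv a.k b.k) ≫
      colimit.ι (codeDiag Gv S) (ConeCode.sumObj Gv S a b) := by
    rw [← hx, ← colimit.w (codeDiag Gv S) (ConeCode.sumIn₁ Gv S a b)]; exact (Category.assoc _ _ _).symm
  have hb : s' = (y ≫ ksumIn₂ Gv a.k b.k) ≫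
      colimit.ι (codeDiag Gv S) (ConeCode.sumObj Gv S a b) := by
    rw [← hy, ← colimit.w (codeDiag Gv S) (ConeCode.sumIn₂ Gv S a b)]; exact (Category.assoc _ _ _).symm
  rw [ha, hb]
  refine code_merge Gv S (ConeCode.sumObj Gv S a b) k₀ _ _ ?_
  intro j
  have h1 : (x ≫ ksumIn₁ Gv a.k b.k) ≫ (ConeCode.sumObj Gv S a b).c j =
      s ≫ codeProj Gv S j := by
    rw [ha]; exact ((Category.assoc _ _ _).trans (congrArg (fun t => (x ≫ ksumIn₁ Gv a.k b.k) ≫ t) (ι_codeProj Gv S (ConeCode.sumObj Gv S a b) j))).symm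
  have h2 : (y ≫ ksumIn₂ Gv a.k b.k) ≫ (ConeCode.sumObj Gv S a b).c j =
      s' ≫ codeProj Gv S j := by
    rw [hb]; exact ((Category.assoc _ _ _).trans (congrArg (fun t => (y ≫ ksumIn₂ Gv a.k b.k) ≫ t) (ι_codeProj Gv S (ConeCode.sumObj Gv S a b) j))).symm
  erw [h1, h2, h]

end ConeCodes

noncomputable section Density

variable {L : Type u} [Category.{v} L] [HasColimits L] {ιG : Type v} (Gv : ιG → L)

abbrev constS (X : L) : PUnit.{v+1} → L := fun _ => X

def canMap (X : L) : codeColim Gv (constS X) ⟶ X := codeProj Gv (constS X) PUnit.unit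

lemma isIso_canMap (hG : ∀ i, FinPres (Gv i)) (hdet : ObjectProperty.IsDetecting (fun X => X ∈ Set.range Gv)) (X : L) :
    IsIso (canMap Gv X) := by
  apply hdet
  rintro G ⟨i, rfl⟩ t
  let a : ConeCode Gv (constS X) := ⟨kgen Gv i, fun _ => t⟩
  refine ⟨colimit.ι (codeDiag Gv (constS X)) a, ι_codeProj Gv (constS X) a PUnit.unit, ?_⟩
  intro s' hs'
  refine code_hom_ext Gv (constS X) hG (kgen Gv i) s' _ ?_
  intro j
  cases j
  erw [ι_codeProj Gv (constS X) a PUnit.unit]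
  exact hs'.trans rfl

lemma fp_retract (hG : ∀ i, FinPres (Gv i)) (hdet : ObjectProperty.IsDetecting (fun X => X ∈ Set.range Gv))
    {A : L} (hA : FinPres A) :
    ∃ (k₀ : Codes Gv) (s : A ⟶ WC Gv k₀) (p : WC Gv k₀ ⟶ A), s ≫ p = 𝟙 A := by
  haveI := isIso_canMap Gv hG hdet A
  obtain ⟨a, g, hg0⟩ := hA.factor inferInstance (codeDiag Gv (constS A))
    (colimit.isColimit _) (inv (canMap Gv A) : A ⟶ codeColim Gv (constS A))
  have hg : g ≫ colimit.ι (codeDiag Gv (constS A)) a = inv (canMap Gv A) := hg0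
  refine ⟨a.k, g, a.c PUnit.unit, ?_⟩
  have h1 : colimit.ι (codeDiag Gv (constS A)) a ≫ canMap Gv A = a.c PUnit.unit :=
    ι_codeProj Gv (constS A) a PUnit.unit
  calc g ≫ a.c PUnit.unit
      = g ≫ colimit.ι (codeDiag Gv (constS A)) a ≫ canMap Gv A := by rw [h1]
    _ = (g ≫ colimit.ι (codeDiag Gv (constS A)) a) ≫ canMap Gv A := by erw [Category.assoc]
    _ = inv (canMap Gv A) ≫ canMap Gv A := by rw [hg]; rfl
    _ = 𝟙 A := IsIso.inv_hom_id _

variable {K : Type v} (S : K → L)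

def prodFan : Fan S := Fan.mk (codeColim Gv S) (codeProj Gv S)

def liftDiagMap {X : L} (t : ∀ j, X ⟶ S j) :
    codeColim Gv (constS X) ⟶ codeColim Gv S :=
  colimit.desc (codeDiag Gv (constS X))
    ⟨codeColim Gv S,
     { app := fun a => colimit.ι (codeDiag Gv S) ⟨a.k, fun j => a.c PUnit.unit ≫ t j⟩
       naturality := by
          intro a b u
          dsimp [codeDiag]
          erw [Category.comp_id]
          exact colimit.w (codeDiag Gv S)
            (⟨u.1, fun j => by rw [← Category.assoc, u.2 PUnit.unit]⟩ :
              (⟨a.k, fun j => a.c PUnit.unit ≫ t j⟩ : ConeCode Gv S) ⟶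
              ⟨b.k, fun j => b.c PUnit.unit ≫ t j⟩) }⟩

@[simp] lemma ι_liftDiagMap {X : L} (t : ∀ j, X ⟶ S j) (a : ConeCode Gv (constS X)) :
    colimit.ι (codeDiag Gv (constS X)) a ≫ liftDiagMap Gv S t =
      colimit.ι (codeDiag Gv S) ⟨a.k, fun j => a.c PUnit.unit ≫ t j⟩ :=
  colimit.ι_desc _ _

lemma liftDiagMap_proj {X : L} (t : ∀ j, X ⟶ S j) (j : K) :
    liftDiagMap Gv S t ≫ codeProj Gv S j = canMap Gv X ≫ t j := by
  apply colimit.hom_ext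
  intro a
  erw [← Category.assoc, ι_liftDiagMap, ι_codeProj, ← Category.assoc]
  rw [show colimit.ι (codeDiag Gv (constS X)) a ≫ canMap Gv X = a.c PUnit.unit from
    ι_codeProj Gv (constS X) a PUnit.unit]
  rfl

lemma prod_hom_uniq (hG : ∀ i, FinPres (Gv i)) (hdet : ObjectProperty.IsDetecting (fun X => X ∈ Set.range Gv))
    {X : L} (m m' : X ⟶ codeColim Gv S)
    (h : ∀ j, m ≫ codeProj Gv S j = m' ≫ codeProj Gv S j) : m = m' := by
  haveI := isIso_canMap Gv hG hdet X
  rw [← cancel_epi (canMap Gv X)]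
  apply colimit.hom_ext
  intro a
  have e1 : colimit.ι (codeDiag Gv (constS X)) a ≫ canMap Gv X = a.c PUnit.unit :=
    ι_codeProj Gv (constS X) a PUnit.unit
  erw [← Category.assoc, e1, ← Category.assoc, e1]
  apply code_hom_ext Gv S hG a.k
  intro j
  erw [Category.assoc, Category.assoc, h j]

def prodFanIsLimit (hG : ∀ i, FinPres (Gv i)) (hdet : ObjectProperty.IsDetecting (fun X => X ∈ Set.range Gv)) :
    IsLimit (prodFan Gv S) := by
  haveI : ∀ X : L, IsIso (canMap Gv X) := isIso_canMap Gv hG hdet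
  refine mkFanLimit _ (fun s => inv (canMap Gv s.pt) ≫ liftDiagMap Gv S s.proj) ?_ ?_
  · intro s j
    have := liftDiagMap_proj Gv S s.proj j
    erw [Category.assoc]
    erw [show liftDiagMap Gv S s.proj ≫ (prodFan Gv S).proj j = canMap Gv s.pt ≫ s.proj j
      from this]
    rw [← Category.assoc, IsIso.inv_hom_id, Category.id_comp]
  · intro s m hm
    apply prod_hom_uniq Gv S hG hdet
    intro j
    have h2 : (inv (canMap Gv s.pt) ≫ liftDiagMap Gv S s.proj) ≫ codeProj Gv S j
        = s.proj j := by
      rw [Category.assoc, liftDiagMap_proj Gv S s.proj j, ← Category.assoc,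
        IsIso.inv_hom_id, Category.id_comp]
    erw [h2]
    exact hm j

end Density

noncomputable section WeakRefl

variable {L : Type u} [Category.{v} L] [HasColimits L]
variable {ι : Type v} (A B : ι → L) (h : ∀ i, A i ⟶ B i)

abbrev Probs (X : L) : Type v := Σ i : ι, (A i ⟶ X)

def probSrc (X : L) : L := ∐ (fun p : Probs A X => A p.1)

def probTgt (X : L) : L := ∐ (fun p : Probs A X => B p.1)

def probMapH (X : L) : probSrc A X ⟶ probTgt A B X :=
  Sigma.desc fun p => h p.1 ≫ Sigma.ι (fun p : Probs A X => B p.1) p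

def probMapS (X : L) : probSrc A X ⟶ X := Sigma.desc fun p => p.2

def stepObj (X : L) : L := pushout (probMapH A B h X) (probMapS A X)

def stepInc (X : L) : X ⟶ stepObj A B h X := pushout.inr _ _

structure NatV : Type v where
  n : ℕ

instance : Preorder NatV := Preorder.lift NatV.n

instance : IsDirected NatV (· ≤ ·) :=
  ⟨fun a b => ⟨⟨max a.n b.n⟩, le_max_left a.n b.n, le_max_right a.n b.n⟩⟩

instance : Nonempty NatV := ⟨⟨0⟩⟩

lemma NatV.le_n {m n : NatV} (hh : m ≤ n) : m.n ≤ n.n := hh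

variable (X : L)

def chainObj : ℕ → L
  | 0 => X
  | n+1 => stepObj A B h (chainObj n)

def chainMap (n : ℕ) : chainObj A B h X n ⟶ chainObj A B h X (n+1) :=
  stepInc A B h (chainObj A B h X n)

abbrev chain : ℕ ⥤ L := Functor.ofSequence (chainMap A B h X)

def chainU : NatV.{v} ⥤ L where
  obj n := chainObj A B h X n.n
  map {m n} f := (chain A B h X).map (homOfLE (NatV.le_n (leOfHom f)))
  map_id n := by
    show (chain A B h X).map (homOfLE (NatV.le_n (leOfHom (𝟙 n)))) =
      𝟙 (chainObj A B h X n.n)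
    rw [Subsingleton.elim (homOfLE (NatV.le_n (leOfHom (𝟙 n)))) (𝟙 n.n)]
    exact (chain A B h X).map_id _
  map_comp {m n p} f g := by
    show (chain A B h X).map (homOfLE (NatV.le_n (leOfHom (f ≫ g)))) =
      (chain A B h X).map (homOfLE (NatV.le_n (leOfHom f))) ≫
        (chain A B h X).map (homOfLE (NatV.le_n (leOfHom g)))
    rw [← CategoryTheory.Functor.map_comp]
    exact congrArg (chain A B h X).map (Subsingleton.elim _ _)

lemma chainU_map_succ (n : ℕ) (f : (⟨n⟩ : NatV.{v}) ⟶ ⟨n+1⟩) :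
    (chainU A B h X).map f = chainMap A B h X n := by
  show (chain A B h X).map (homOfLE (NatV.le_n (leOfHom f))) = chainMap A B h X n
  rw [← Functor.ofSequence_map_homOfLE_succ (chainMap A B h X) n]

def reflObj : L := colimit (chainU A B h X)

def reflInc : X ⟶ reflObj A B h X := colimit.ι (chainU A B h X) ⟨0⟩

lemma reflObj_inj (hA : ∀ i, FinPres (A i)) (i : ι) (g : A i ⟶ reflObj A B h X) :
    ∃ g' : B i ⟶ reflObj A B h X, h i ≫ g' = g := by
  obtain ⟨⟨n⟩, u, hu0⟩ := (hA i).factor inferInstance (chainU A B h X)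
    (colimit.isColimit _) g
  have hu : u ≫ colimit.ι (chainU A B h X) ⟨n⟩ = g := hu0
  let p : Probs A (chainObj A B h X n) := ⟨i, u⟩
  refine ⟨(Sigma.ι (fun p : Probs A (chainObj A B h X n) => B p.1) p ≫
    pushout.inl (probMapH A B h (chainObj A B h X n)) (probMapS A (chainObj A B h X n))) ≫
    colimit.ι (chainU A B h X) ⟨n+1⟩, ?_⟩
  have e1 : h i ≫ Sigma.ι (fun p : Probs A (chainObj A B h X n) => B p.1) p
      = Sigma.ι (fun p : Probs A (chainObj A B h X n) => A p.1) p ≫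
        probMapH A B h (chainObj A B h X n) := by
    rw [probMapH, colimit.ι_desc]; rfl
  have e2 : Sigma.ι (fun p : Probs A (chainObj A B h X n) => A p.1) p ≫
      probMapS A (chainObj A B h X n) = u := by
    rw [probMapS, colimit.ι_desc]; rfl
  have e3 : chainMap A B h X n ≫ colimit.ι (chainU A B h X) ⟨n+1⟩ =
      colimit.ι (chainU A B h X) ⟨n⟩ := by
    rw [← chainU_map_succ A B h X n (homOfLE (by exact Nat.le_succ n))]
    exact colimit.w _ _
  erw [← Category.assoc, ← Category.assoc, e1]
  erw [Category.assoc, Category.assoc]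
  erw [← Category.assoc (probMapH A B h (chainObj A B h X n)), pushout.condition]
  erw [← Category.assoc, ← Category.assoc, e2, Category.assoc]
  show u ≫ chainMap A B h X n ≫ colimit.ι (chainU A B h X) ⟨n+1⟩ = g
  erw [e3, hu]

variable {T : L}

def extSeq (g : X ⟶ T) (hT : ∀ i (q : A i ⟶ T), ∃ q', h i ≫ q' = q) :
    ∀ n, chainObj A B h X n ⟶ T
  | 0 => g
  | n+1 => pushout.desc
      (Sigma.desc fun p => Classical.choose (hT p.1 (p.2 ≫ extSeq g hT n)))
      (extSeq g hT n)
      (by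
        apply Sigma.hom_ext
        intro p
        erw [← Category.assoc, ← Category.assoc]
        rw [show Sigma.ι (fun p : Probs A (chainObj A B h X n) => A p.1) p ≫
            probMapH A B h (chainObj A B h X n) =
            h p.1 ≫ Sigma.ι (fun p : Probs A (chainObj A B h X n) => B p.1) p from by
          rw [probMapH, colimit.ι_desc]; rfl]
        rw [show Sigma.ι (fun p : Probs A (chainObj A B h X n) => A p.1) p ≫
            probMapS A (chainObj A B h X n) = p.2 from by
          rw [probMapS, colimit.ι_desc]; rfl]
        erw [Category.assoc, colimit.ι_desc]
        exact Classical.choose_spec (hT p.1 (p.2 ≫ extSeq g hT n)))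

lemma chainMap_extSeq (g : X ⟶ T) (hT : ∀ i (q : A i ⟶ T), ∃ q', h i ≫ q' = q) (n : ℕ) :
    chainMap A B h X n ≫ extSeq A B h X g hT (n+1) = extSeq A B h X g hT n :=
  pushout.inr_desc _ _ _

lemma chain_map_extSeq (g : X ⟶ T) (hT : ∀ i (q : A i ⟶ T), ∃ q', h i ≫ q' = q) :
    ∀ (m n : ℕ) (hmn : m ≤ n),
      (chain A B h X).map (homOfLE hmn) ≫ extSeq A B h X g hT n = extSeq A B h X g hT m := by
  intro m n hmn
  induction n, hmn using Nat.le_induction with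
  | base =>
    have hf : (chain A B h X).map (homOfLE (le_refl m)) = 𝟙 _ := by
      rw [Subsingleton.elim (homOfLE (le_refl m)) (𝟙 m)]
      exact (chain A B h X).map_id m
    erw [hf, Category.id_comp]
  | succ n hmn ih =>
    have hf : (chain A B h X).map (homOfLE (Nat.le_succ_of_le hmn)) =
        (chain A B h X).map (homOfLE hmn) ≫ chainMap A B h X n := by
      rw [Subsingleton.elim (homOfLE (Nat.le_succ_of_le hmn))
        (homOfLE hmn ≫ homOfLE (Nat.le_succ n)), CategoryTheory.Functor.map_comp,
        Functor.ofSequence_map_homOfLE_succ]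
      rfl
    erw [hf, Category.assoc, chainMap_extSeq, ih]

lemma reflObj_wr (g : X ⟶ T) (hT : ∀ i (q : A i ⟶ T), ∃ q', h i ≫ q' = q) :
    ∃ kk : reflObj A B h X ⟶ T, reflInc A B h X ≫ kk = g := by
  refine ⟨colimit.desc (chainU A B h X)
    ⟨T, { app := fun n => extSeq A B h X g hT n.n
          naturality := by
            intro m n f
            have := chain_map_extSeq A B h X g hT m.n n.n (NatV.le_n (leOfHom f))
            exact this.trans (Category.comp_id _).symm
             }⟩, ?_⟩
  exact colimit.ι_desc _ _

end WeakRefl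

/-- Let `D = M`-inj be a finite injectivity class in an lfp category
`L`, `J : D ↪ L` the inclusion, and `F : D ⥤ Set` a functor preserving small
products and filtered colimits.  If every element `x ∈ F L'` factors through some
natural transformation `Hom_L(A, J-) ⟶ F` with `A` finitely presentable, then
there is a finitely presentable `B` and a pointwise surjective natural
transformation `Hom_L(B, J-) ⟶ F`. -/
theorem statement13 (L : Type u) [Category.{v} L] (hL : IsLFP L)
    (ι : Type v) (A B : ι → L) (hA : ∀ i, FinPres (A i)) (hB : ∀ i, FinPres (B i))
    (h : ∀ i, A i ⟶ B i)
    (F : ObjectProperty.FullSubcategory (fun X => X ∈ Inj A B h) ⥤ Type v)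
    (hprod : ∀ κ : Type v, PreservesLimitsOfShape (Discrete κ) F)
    (hfilt : ∀ (J : Type v) (_ : SmallCategory J), IsFiltered J →
      PreservesColimitsOfShape J F)
    (hgen : ∀ (X : ObjectProperty.FullSubcategory (fun X => X ∈ Inj A B h)) (x : F.obj X),
      ∃ (A₀ : L) (_ : FinPres A₀)
        (η : ObjectProperty.ι (fun X => X ∈ Inj A B h) ⋙ coyoneda.obj (op A₀) ⟶ F)
        (y : A₀ ⟶ X.obj), η.app X y = x) :
    ∃ (B₀ : L) (_ : FinPres B₀)
      (η : ObjectProperty.ι (fun X => X ∈ Inj A B h) ⋙ coyoneda.obj (op B₀) ⟶ F),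
      ∀ X, Function.Surjective (η.app X) := by
  haveI : HasColimits L := hL.hasColimits
  obtain ⟨ιG, Gv, hdet, hG⟩ := hL.exists_generator
  -- weak reflections of codes
  let R : Codes Gv → L := fun k => reflObj A B h (WC Gv k)
  have hRmem : ∀ k, R k ∈ Inj A B h := fun k i g => reflObj_inj A B h (WC Gv k) hA i g
  let rk : ∀ k, WC Gv k ⟶ R k := fun k => reflInc A B h (WC Gv k)
  -- index & family
  let K : Type v := Σ k : Codes Gv, F.obj ⟨R k, hRmem k⟩
  let S : K → L := fun j => R j.1
  have hSmem : ∀ j, S j ∈ Inj A B h := fun j => hRmem j.1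
  -- the product
  let P : L := codeColim Gv S
  have hplim : IsLimit (prodFan Gv S) := prodFanIsLimit Gv S hG hdet
  have hPmem : P ∈ Inj A B h := by
    intro i g
    have he : ∀ j : K, ∃ e : B i ⟶ S j, h i ≫ e = g ≫ codeProj Gv S j :=
      fun j => hSmem j i (g ≫ codeProj Gv S j)
    choose e hee using he
    refine ⟨hplim.lift (Fan.mk (B i) e), ?_⟩
    apply prod_hom_uniq Gv S hG hdet
    intro j
    have hfac : hplim.lift (Fan.mk (B i) e) ≫ codeProj Gv S j = e j :=
      hplim.fac (Fan.mk (B i) e) ⟨j⟩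
    erw [Category.assoc, hfac, hee j]
  -- D-side structures
  let Pd : ObjectProperty.FullSubcategory (fun X => X ∈ Inj A B h) := ⟨P, hPmem⟩
  let Sd : K → ObjectProperty.FullSubcategory (fun X => X ∈ Inj A B h) := fun j => ⟨S j, hSmem j⟩
  let projD : ∀ j, Pd ⟶ Sd j := fun j => ObjectProperty.homMk (codeProj Gv S j)
  let fanD : Fan Sd := Fan.mk Pd projD
  have hfanD : IsLimit fanD := by
    refine mkFanLimit _
      (fun s => ObjectProperty.homMk (hplim.lift (Fan.mk s.pt.obj (fun j => (s.proj j).hom)) : s.pt.obj ⟶ P)) ?_ ?_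
    · intro s j
      exact ObjectProperty.hom_ext _ (hplim.fac (Fan.mk s.pt.obj (fun j => (s.proj j).hom)) ⟨j⟩)
    · intro s m hm
      apply ObjectProperty.hom_ext
      apply prod_hom_uniq Gv S hG hdet
      intro j
      have h2 : (hplim.lift (Fan.mk s.pt.obj (fun j => (s.proj j).hom)) : s.pt.obj ⟶ P) ≫
          codeProj Gv S j = (s.proj j).hom :=
        hplim.fac (Fan.mk s.pt.obj (fun j => (s.proj j).hom)) ⟨j⟩
      erw [h2]
      exact congrArg InducedCategory.Hom.hom (hm j)
  -- the generic element x₀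
  haveI := hprod K
  have htype : IsLimit (F.mapCone fanD) := isLimitOfPreserves F hfanD
  let c' : Cone (Discrete.functor Sd ⋙ F) :=
    ⟨PUnit.{v+1}, Discrete.natTrans (fun jd => TypeCat.ofHom (fun _ => jd.as.2))⟩
  let x₀ : F.obj Pd := htype.lift c' PUnit.unit
  have hx₀ : ∀ j : K, F.map (projD j) x₀ = j.2 := by
    intro j
    have := ConcreteCategory.congr_hom (htype.fac c' ⟨j⟩) PUnit.unit
    exact this
  -- apply hgen at the generic point
  obtain ⟨B₀, hB₀, η, y, hy⟩ := hgen Pd x₀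
  refine ⟨B₀, hB₀, η, ?_⟩
  intro X x
  obtain ⟨A₀, hA₀, ν, g, hg⟩ := hgen X x
  obtain ⟨k, s, p₀, hsp⟩ := fp_retract Gv hG hdet hA₀
  let a : F.obj ⟨R k, hRmem k⟩ := ν.app ⟨R k, hRmem k⟩ (s ≫ rk k)
  let j : K := ⟨k, a⟩
  obtain ⟨w, hw⟩ := reflObj_wr A B h (WC Gv k) (p₀ ≫ g) (X.property)
  let Rd : ObjectProperty.FullSubcategory (fun X => X ∈ Inj A B h) := ⟨R k, hRmem k⟩
  let wD : Rd ⟶ X := ObjectProperty.homMk w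
  let mw : Pd ⟶ X := ObjectProperty.homMk (codeProj Gv S j ≫ w : P ⟶ X.obj)
  refine ⟨y ≫ mw.hom, ?_⟩
  have hnat' : η.app X (y ≫ mw.hom) = F.map mw (η.app Pd y) :=
    FunctorToTypes.naturality η mw y
  rw [hnat', hy]
  have hsplit : F.map mw x₀ = F.map wD (F.map (projD j) x₀) := by
    rw [← FunctorToTypes.map_comp_apply]
    rfl
  rw [hsplit, hx₀ j]
  have hnu' : ν.app X ((s ≫ rk k) ≫ w) = F.map wD a :=
    FunctorToTypes.naturality ν wD (s ≫ rk k : A₀ ⟶ R k)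
  rw [← hnu']
  rw [Category.assoc, hw, ← Category.assoc, hsp, Category.id_comp]
  exact hg

end Paper
end
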